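/- arXiv:2309.00070 — 7 statements merged into one kernel-verified Lean document; each statement's English description precedes it below -/
import Mathlib

section
/- Let C and D be closed subsets of a normed space X, with 0 ∈ C, and let ε > 0, ρ > 0 and ρ̄ ≥ 2ρ. If C ∩ {x : ‖x‖ ≤ ρ̄} ⊆ D + εB, then dist(x, D) ≤ dist(x, C) + ε for all x with ‖x‖ ≤ ρ. -/
open Pointwise

/-- Let C and D be closed subsets of a normed space X, with 0 ∈ C, and let
ε > 0, ρ > 0 and ρ̄ ≥ 2ρ.  If C ∩ {x : ‖x‖ ≤ ρ̄} ⊆ D + εB, then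
dist(x, D) ≤ dist(x, C) + ε for all x with ‖x‖ ≤ ρ. -/
theorem stmt1 {X : Type*} [NormedAddCommGroup X] [NormedSpace ℝ X]
    (C D : Set X) (hC : IsClosed C) (hD : IsClosed D) (h0C : (0 : X) ∈ C)
    (ε ρ ρbar : ℝ) (hε : 0 < ε) (hρ : 0 < ρ) (hρbar : 2 * ρ ≤ ρbar)
    (h : C ∩ {x : X | ‖x‖ ≤ ρbar} ⊆ D + ε • Metric.closedBall (0 : X) 1) :
    ∀ x : X, ‖x‖ ≤ ρ → Metric.infDist x D ≤ Metric.infDist x C + ε := by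
  intro x hx
  have hCne : C.Nonempty := ⟨0, h0C⟩
  -- helper: membership in D + εB gives a point of D within ε
  have key : ∀ y ∈ C, ‖y‖ ≤ ρbar → ∀ z : X, Metric.infDist z D ≤ ‖z - y‖ + ε := by
    intro y hy hyn z
    obtain ⟨a, ha, b, hb, hab⟩ := h ⟨hy, hyn⟩
    obtain ⟨c, hc, rfl⟩ := hb
    simp only [Metric.mem_closedBall, dist_zero_right] at hc
    have hDle : Metric.infDist z D ≤ dist z a := Metric.infDist_le_dist_of_mem ha
    have : dist z a ≤ ‖z - y‖ + ε := by
      have : dist z a ≤ dist z y + dist y a := dist_triangle z y a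
      have hya : dist y a = ‖ε • c‖ := by
        rw [dist_eq_norm]
        rw [← hab]; simp [add_sub_cancel_left]
      have : dist y a ≤ ε := by
        rw [hya, norm_smul, Real.norm_eq_abs, abs_of_pos hε]
        nlinarith
      calc dist z a ≤ dist z y + dist y a := dist_triangle z y a
        _ ≤ ‖z - y‖ + ε := by rw [dist_eq_norm]; linarith
    linarith
  set d := Metric.infDist x C with hd
  have hdle : d ≤ ρ := le_trans (by simpa using Metric.infDist_le_dist_of_mem h0C) hx
  rcases lt_or_ge d ρ with hcase | hcase
  · -- d < ρ : approximate
    refine le_of_forall_pos_le_add fun η hη => ?_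
    set δ := min η (ρ - d) with hδ
    have hδpos : 0 < δ := lt_min hη (by linarith)
    obtain ⟨y, hyC, hyd⟩ := (Metric.infDist_lt_iff hCne).mp (show d < d + δ by linarith)
    have hxy : ‖x - y‖ < d + δ := by rwa [← dist_eq_norm]
    have hyn : ‖y‖ ≤ ρbar := by
      have : ‖y‖ ≤ ‖x‖ + ‖x - y‖ := by
        have h1 := norm_sub_norm_le y x
        rw [norm_sub_rev] at h1
        linarith
      have hδ2 : δ ≤ ρ - d := min_le_right _ _
      linarith
    have := key y hyC hyn x
    have hδη : δ ≤ η := min_le_left _ _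
    linarith
  · -- d = ρ = ‖x‖ : use y = 0
    have h0n : ‖(0 : X)‖ ≤ ρbar := by simp; linarith
    have := key 0 h0C h0n x
    simp only [sub_zero] at this
    linarith
end

section
/- Let f, g be usc functions from S to [0,1] with 0 ∈ S. Then for every ρ ≥ 0, the hat-distance and the truncated ρ-distance satisfy d̂l_ρ(f, g) ≤ dl_ρ(f, g) ≤ d̂l_{2ρ}(f, g). -/
open Metric Set Filter Pointwise
open Topology

/-- The hypograph of `f` restricted to `S`, as a subset of `(Fin m → ℝ) × ℝ`
(carrying the max-norm, since both the `Pi` and `Prod` norms are sup-norms). -/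
def hypo {m : ℕ} (S : Set (Fin m → ℝ)) (f : (Fin m → ℝ) → ℝ) :
    Set ((Fin m → ℝ) × ℝ) :=
  {p | p.1 ∈ S ∧ p.2 ≤ f p.1}

/-- The truncated ρ-hypo-distance
`dl_ρ(f,g) = sup { |dist(x̄, hypo f) − dist(x̄, hypo g)| : ‖x̄‖ ≤ ρ }`. -/
noncomputable def dlrho {m : ℕ} (S : Set (Fin m → ℝ)) (f g : (Fin m → ℝ) → ℝ)
    (ρ : ℝ) : ℝ :=
  sSup ((fun p => |Metric.infDist p (hypo S f) - Metric.infDist p (hypo S g)|) ''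
    {p : (Fin m → ℝ) × ℝ | ‖p‖ ≤ ρ})

/-- The hypo-distance `dl(f,g) = ∫₀^∞ dl_ρ(f,g) e^{−ρ} dρ`. -/
noncomputable def dl {m : ℕ} (S : Set (Fin m → ℝ)) (f g : (Fin m → ℝ) → ℝ) : ℝ :=
  ∫ ρ in Set.Ioi (0 : ℝ), dlrho S f g ρ * Real.exp (-ρ)

/-- The Attouch–Wets hat-distance
`d̂l_ρ(f,g) = inf{η ≥ 0 : hypo f ∩ ρ𝕊 ⊆ hypo g + η𝕊 and hypo g ∩ ρ𝕊 ⊆ hypo f + η𝕊}`. -/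
noncomputable def hatdl {m : ℕ} (S : Set (Fin m → ℝ)) (f g : (Fin m → ℝ) → ℝ)
    (ρ : ℝ) : ℝ :=
  sInf {η : ℝ | 0 ≤ η ∧
    hypo S f ∩ Metric.closedBall (0 : (Fin m → ℝ) × ℝ) ρ ⊆ hypo S g + Metric.closedBall (0 : (Fin m → ℝ) × ℝ) η ∧
    hypo S g ∩ Metric.closedBall (0 : (Fin m → ℝ) × ℝ) ρ ⊆ hypo S f + Metric.closedBall (0 : (Fin m → ℝ) × ℝ) η}

lemma hypo_isClosed {m : ℕ} {S : Set (Fin m → ℝ)} (hS : IsClosed S)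
    {f : (Fin m → ℝ) → ℝ} (hf : UpperSemicontinuousOn f S) : IsClosed (hypo S f) := by
  rw [← isSeqClosed_iff_isClosed]
  intro pn p hpn hlim
  have hfst : Tendsto (fun n => (pn n).1) atTop (𝓝 p.1) :=
    (continuous_fst.tendsto p).comp hlim
  have hsnd : Tendsto (fun n => (pn n).2) atTop (𝓝 p.2) :=
    (continuous_snd.tendsto p).comp hlim
  have hmemS : ∀ n, (pn n).1 ∈ S := fun n => (hpn n).1
  have h1 : p.1 ∈ S := hS.mem_of_tendsto hfst (Eventually.of_forall hmemS)
  refine ⟨h1, ?_⟩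
  by_contra hcon
  push_neg at hcon
  set c := (f p.1 + p.2) / 2 with hc
  have hc1 : f p.1 < c := by rw [hc]; linarith
  have hc2 : c < p.2 := by rw [hc]; linarith
  have hev : ∀ᶠ x in 𝓝[S] p.1, f x < c := hf p.1 h1 c hc1
  have hW : Tendsto (fun n => (pn n).1) atTop (𝓝[S] p.1) :=
    tendsto_nhdsWithin_iff.mpr ⟨hfst, Eventually.of_forall hmemS⟩
  have hev2 : ∀ᶠ n in atTop, (pn n).2 ≤ c := by
    filter_upwards [hW.eventually hev] with n hn
    exact le_of_lt (lt_of_le_of_lt (hpn n).2 hn)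
  have := le_of_tendsto hsnd hev2
  linarith

lemma key_le {m : ℕ} {F G : Set ((Fin m → ℝ) × ℝ)} (hF : IsClosed F)
    (h0F : (0 : (Fin m → ℝ) × ℝ) ∈ F) {p : (Fin m → ℝ) × ℝ} {ρ η : ℝ}
    (hp : ‖p‖ ≤ ρ)
    (hincl : F ∩ Metric.closedBall 0 (2 * ρ) ⊆ G + Metric.closedBall 0 η) :
    infDist p G ≤ infDist p F + η := by
  obtain ⟨q, hqF, hq⟩ := hF.exists_infDist_eq_dist ⟨_, h0F⟩ p
  have hdq : dist p q ≤ ρ := by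
    rw [← hq]
    calc infDist p F ≤ dist p 0 := infDist_le_dist_of_mem h0F
    _ = ‖p‖ := by rw [dist_zero_right]
    _ ≤ ρ := hp
  have hqball : q ∈ Metric.closedBall (0 : (Fin m → ℝ) × ℝ) (2 * ρ) := by
    rw [mem_closedBall_zero_iff]
    have h1 := norm_add_le (q - p) p
    rw [sub_add_cancel] at h1
    have h2 : ‖q - p‖ = dist p q := by rw [dist_comm, dist_eq_norm]
    linarith
  obtain ⟨q', hq'G, e, he, hqe⟩ := Set.mem_add.mp (hincl ⟨hqF, hqball⟩)
  have h3 : dist q q' ≤ η := by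
    have h4 : q - q' = e := by rw [← hqe]; ring
    rw [dist_eq_norm, h4]
    exact mem_closedBall_zero_iff.mp he
  calc infDist p G ≤ dist p q' := infDist_le_dist_of_mem hq'G
  _ ≤ dist p q + dist q q' := dist_triangle p q q'
  _ ≤ infDist p F + η := by rw [hq]; exact add_le_add le_rfl h3

lemma incl_one {m : ℕ} {S : Set (Fin m → ℝ)} {f g : (Fin m → ℝ) → ℝ}
    (hf01 : ∀ x ∈ S, f x ∈ Set.Icc (0 : ℝ) 1) (hg01 : ∀ x ∈ S, g x ∈ Set.Icc (0 : ℝ) 1)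
    (r : ℝ) :
    hypo S f ∩ Metric.closedBall (0 : (Fin m → ℝ) × ℝ) r ⊆
      hypo S g + Metric.closedBall (0 : (Fin m → ℝ) × ℝ) 1 := by
  rintro ⟨x, α⟩ ⟨⟨hx, hα⟩, -⟩
  rw [Set.mem_add]
  refine ⟨(x, min α (g x)), ⟨hx, min_le_right _ _⟩, (0, α - min α (g x)), ?_, ?_⟩
  · rw [mem_closedBall_zero_iff, Prod.norm_def, norm_zero]
    have ht0 : 0 ≤ α - min α (g x) := by
      have := min_le_left α (g x); linarith
    have ht1 : α - min α (g x) ≤ 1 := by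
      rcases le_total α (g x) with h | h
      · rw [min_eq_left h]; linarith
      · rw [min_eq_right h]
        have := (hf01 x hx).2
        have := (hg01 x hx).1
        linarith
    rw [Real.norm_eq_abs, abs_of_nonneg ht0]
    simp [ht1]
  · ext <;> simp

lemma incl_aux {m : ℕ} {F G : Set ((Fin m → ℝ) × ℝ)} (hG : IsClosed G)
    (hGne : G.Nonempty) {r η : ℝ}
    (h : ∀ p ∈ F ∩ Metric.closedBall (0 : (Fin m → ℝ) × ℝ) r, infDist p G ≤ η) :
    F ∩ Metric.closedBall (0 : (Fin m → ℝ) × ℝ) r ⊆ G + Metric.closedBall 0 η := by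
  intro p hp
  obtain ⟨q, hqG, hq⟩ := hG.exists_infDist_eq_dist hGne p
  rw [Set.mem_add]
  refine ⟨q, hqG, p - q, ?_, by ring⟩
  rw [mem_closedBall_zero_iff, ← dist_eq_norm]
  rw [← hq]
  exact h p hp


/-- Let f, g be usc functions from S to [0,1] with 0 ∈ S.  Then for every
ρ ≥ 0, the hat-distance and truncated ρ-distance satisfy
d̂l_ρ(f,g) ≤ dl_ρ(f,g) ≤ d̂l_{2ρ}(f,g). -/
theorem stmt5 {m : ℕ} (S : Set (Fin m → ℝ)) (hS : IsClosed S)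
    (h0S : (0 : Fin m → ℝ) ∈ S) (f g : (Fin m → ℝ) → ℝ)
    (hf : UpperSemicontinuousOn f S) (hg : UpperSemicontinuousOn g S)
    (hf01 : ∀ x ∈ S, f x ∈ Set.Icc (0 : ℝ) 1) (hg01 : ∀ x ∈ S, g x ∈ Set.Icc (0 : ℝ) 1) :
    ∀ ρ : ℝ, 0 ≤ ρ →
      hatdl S f g ρ ≤ dlrho S f g ρ ∧ dlrho S f g ρ ≤ hatdl S f g (2 * ρ) := by
  intro ρ hρ
  have hFc : IsClosed (hypo S f) := hypo_isClosed hS hf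
  have hGc : IsClosed (hypo S g) := hypo_isClosed hS hg
  have h0F : (0 : (Fin m → ℝ) × ℝ) ∈ hypo S f := ⟨h0S, (hf01 0 h0S).1⟩
  have h0G : (0 : (Fin m → ℝ) × ℝ) ∈ hypo S g := ⟨h0S, (hg01 0 h0S).1⟩
  -- the image set defining dlrho
  set T := ((fun p => |Metric.infDist p (hypo S f) - Metric.infDist p (hypo S g)|) ''
    {p : (Fin m → ℝ) × ℝ | ‖p‖ ≤ ρ}) with hT
  have hTbdd : BddAbove T := by
    refine ⟨ρ, ?_⟩
    rintro a ⟨p, hp, rfl⟩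
    have h1 : infDist p (hypo S f) ≤ ‖p‖ := by
      simpa [dist_zero_right] using infDist_le_dist_of_mem (x := p) h0F
    have h2 : infDist p (hypo S g) ≤ ‖p‖ := by
      simpa [dist_zero_right] using infDist_le_dist_of_mem (x := p) h0G
    have h3 : 0 ≤ infDist p (hypo S f) := infDist_nonneg
    have h4 : 0 ≤ infDist p (hypo S g) := infDist_nonneg
    rw [abs_sub_le_iff]
    constructor <;> [skip; skip] <;>
      simp only [Set.mem_setOf_eq] at hp <;> linarith
  have h0mem : (0 : (Fin m → ℝ) × ℝ) ∈ {p : (Fin m → ℝ) × ℝ | ‖p‖ ≤ ρ} := by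
    simpa using hρ
  have hTne : T.Nonempty := ⟨_, Set.mem_image_of_mem _ h0mem⟩
  have hdl_nonneg : 0 ≤ dlrho S f g ρ := by
    refine le_trans (abs_nonneg _) (le_csSup hTbdd (Set.mem_image_of_mem _ h0mem))
  -- the set defining hatdl at radius r
  have hAbddBelow : ∀ r : ℝ, BddBelow {η : ℝ | 0 ≤ η ∧
      hypo S f ∩ Metric.closedBall (0 : (Fin m → ℝ) × ℝ) r ⊆ hypo S g + Metric.closedBall (0 : (Fin m → ℝ) × ℝ) η ∧
      hypo S g ∩ Metric.closedBall (0 : (Fin m → ℝ) × ℝ) r ⊆ hypo S f + Metric.closedBall (0 : (Fin m → ℝ) × ℝ) η} :=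
    fun r => ⟨0, fun η hη => hη.1⟩
  have hAne : ∀ r : ℝ, Set.Nonempty {η : ℝ | 0 ≤ η ∧
      hypo S f ∩ Metric.closedBall (0 : (Fin m → ℝ) × ℝ) r ⊆ hypo S g + Metric.closedBall (0 : (Fin m → ℝ) × ℝ) η ∧
      hypo S g ∩ Metric.closedBall (0 : (Fin m → ℝ) × ℝ) r ⊆ hypo S f + Metric.closedBall (0 : (Fin m → ℝ) × ℝ) η} :=
    fun r => ⟨1, le_of_lt one_pos, incl_one hf01 hg01 r, incl_one hg01 hf01 r⟩
  constructor
  · -- hatdl ρ ≤ dlrho ρ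
    refine csInf_le (hAbddBelow ρ) ?_
    refine ⟨hdl_nonneg, ?_, ?_⟩
    · refine incl_aux hGc ⟨_, h0G⟩ ?_
      rintro p ⟨hpF, hpb⟩
      have hmem : |infDist p (hypo S f) - infDist p (hypo S g)| ∈ T :=
        Set.mem_image_of_mem _ (mem_closedBall_zero_iff.mp hpb)
      have := le_csSup hTbdd hmem
      rw [infDist_zero_of_mem hpF] at this
      rw [zero_sub, abs_neg, abs_of_nonneg infDist_nonneg] at this
      exact this
    · refine incl_aux hFc ⟨_, h0F⟩ ?_
      rintro p ⟨hpG, hpb⟩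
      have hmem : |infDist p (hypo S f) - infDist p (hypo S g)| ∈ T :=
        Set.mem_image_of_mem _ (mem_closedBall_zero_iff.mp hpb)
      have := le_csSup hTbdd hmem
      rw [infDist_zero_of_mem hpG] at this
      rw [sub_zero, abs_of_nonneg infDist_nonneg] at this
      exact this
  · -- dlrho ρ ≤ hatdl (2ρ)
    have hhat_nonneg : 0 ≤ hatdl S f g (2 * ρ) :=
      le_csInf (hAne _) fun η hη => hη.1
    refine Real.sSup_le ?_ hhat_nonneg
    rintro a ⟨p, hp, rfl⟩
    refine le_csInf (hAne _) ?_
    rintro η ⟨hη0, h1, h2⟩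
    simp only [Set.mem_setOf_eq] at hp
    rw [abs_sub_le_iff]
    constructor
    · have := key_le hGc h0G hp h2
      linarith
    · have := key_le hFc h0F hp h1
      linarith
end

section
/- Let f, g be nondecreasing usc functions from S to [0,1] with 0 ∈ S. For every ρ ∈ [0, ∞], d̂l_ρ(f, g) e^{−ρ} ≤ dl(f, g) ≤ e^{−ρ} + (1 − e^{−ρ}) d̂l_{2ρ}(f, g), where dl(f, g) = ∫₀^∞ dl_τ(f, g) e^{−τ} dτ. -/
open Metric Set Filter Pointwise

section aux
variable {m : ℕ} {S : Set (Fin m → ℝ)} {f g : (Fin m → ℝ) → ℝ}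

lemma hypo_closed (hS : IsClosed S) (hf : UpperSemicontinuousOn f S) :
    IsClosed (hypo S f) := by
  rw [← isSeqClosed_iff_isClosed]
  intro p q hp hpq
  have h1 : Tendsto (fun n => (p n).1) atTop (nhds q.1) :=
    (continuous_fst.tendsto q).comp hpq
  have h2 : Tendsto (fun n => (p n).2) atTop (nhds q.2) :=
    (continuous_snd.tendsto q).comp hpq
  have hq1 : q.1 ∈ S := hS.mem_of_tendsto h1 (Eventually.of_forall fun n => (hp n).1)
  refine ⟨hq1, ?_⟩
  by_contra hlt
  push_neg at hlt
  obtain ⟨y, hy1, hy2⟩ := exists_between hlt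
  have h3 : Tendsto (fun n => (p n).1) atTop (nhdsWithin q.1 S) :=
    tendsto_nhdsWithin_of_tendsto_nhds_of_eventually_within _ h1
      (Eventually.of_forall fun n => (hp n).1)
  have h4 : ∀ᶠ n in atTop, f (p n).1 < y := h3.eventually (hf q.1 hq1 y hy1)
  have h5 : ∀ᶠ n in atTop, (p n).2 ≤ y :=
    h4.mono fun n hn => le_of_lt (lt_of_le_of_lt (hp n).2 hn)
  exact absurd (le_of_tendsto h2 h5) (not_le.mpr hy2)

lemma mem_hypo_zero (h0S : (0 : Fin m → ℝ) ∈ S) (hf0 : 0 ≤ f 0) :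
    ((0, 0) : (Fin m → ℝ) × ℝ) ∈ hypo S f := ⟨h0S, hf0⟩

lemma infDist_hypo_le (hf0 : ∀ x ∈ S, 0 ≤ f x) (hg1 : ∀ x ∈ S, g x ≤ 1)
    (hgne : (hypo S g).Nonempty) (p : (Fin m → ℝ) × ℝ) :
    infDist p (hypo S f) ≤ infDist p (hypo S g) + 1 := by
  by_contra h
  push_neg at h
  have h' : infDist p (hypo S g) < infDist p (hypo S f) - 1 := by linarith
  obtain ⟨⟨x, t⟩, ⟨hxS, ht⟩, hdy⟩ := (infDist_lt_iff hgne).mp h'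
  simp only at hxS ht
  have ha : ((x, t - 1) : (Fin m → ℝ) × ℝ) ∈ hypo S f :=
    ⟨hxS, show t - 1 ≤ f x by linarith [hg1 x hxS, hf0 x hxS]⟩
  have hd : dist ((x, t) : (Fin m → ℝ) × ℝ) (x, t - 1) = 1 := by
    rw [Prod.dist_eq]
    simp [Real.dist_eq]
  have h1 := infDist_le_dist_of_mem (x := p) ha
  have htri := dist_triangle p ((x, t) : (Fin m → ℝ) × ℝ) (x, t - 1)
  rw [hd] at htri
  linarith

end aux

section aux
variable {m : ℕ} {S : Set (Fin m → ℝ)} {f g : (Fin m → ℝ) → ℝ}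

variable (h0S : (0 : Fin m → ℝ) ∈ S)
  (hf01 : ∀ x ∈ S, f x ∈ Set.Icc (0 : ℝ) 1) (hg01 : ∀ x ∈ S, g x ∈ Set.Icc (0 : ℝ) 1)

include h0S hf01 hg01

lemma abs_infDist_sub_le_one (p : (Fin m → ℝ) × ℝ) :
    |infDist p (hypo S f) - infDist p (hypo S g)| ≤ 1 := by
  have hfne : (hypo S f).Nonempty := ⟨_, mem_hypo_zero h0S (hf01 0 h0S).1⟩
  have hgne : (hypo S g).Nonempty := ⟨_, mem_hypo_zero h0S (hg01 0 h0S).1⟩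
  have h1 := infDist_hypo_le (fun x hx => (hf01 x hx).1) (fun x hx => (hg01 x hx).2) hgne p
  have h2 := infDist_hypo_le (fun x hx => (hg01 x hx).1) (fun x hx => (hf01 x hx).2) hfne p
  rw [abs_sub_le_iff]
  constructor <;> linarith

lemma dlrho_bddAbove (ρ : ℝ) :
    BddAbove ((fun p => |Metric.infDist p (hypo S f) - Metric.infDist p (hypo S g)|) ''
      {p : (Fin m → ℝ) × ℝ | ‖p‖ ≤ ρ}) := by
  refine ⟨1, ?_⟩
  rintro v ⟨p, -, rfl⟩
  exact abs_infDist_sub_le_one h0S hf01 hg01 p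

lemma dlrho_nonneg (ρ : ℝ) : 0 ≤ dlrho S f g ρ := by
  rcases isEmpty_or_nonempty (({p : (Fin m → ℝ) × ℝ | ‖p‖ ≤ ρ}) : Set _) with h | h
  · have : ({p : (Fin m → ℝ) × ℝ | ‖p‖ ≤ ρ}) = ∅ := by
      rw [eq_empty_iff_forall_notMem]; exact fun x hx => h.elim ⟨x, hx⟩
    simp [dlrho, this, Real.sSup_empty]
  · obtain ⟨⟨p, hp⟩⟩ := h
    exact le_trans (abs_nonneg _)
      (le_csSup (dlrho_bddAbove h0S hf01 hg01 ρ) (mem_image_of_mem _ hp))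

lemma dlrho_le_one (ρ : ℝ) : dlrho S f g ρ ≤ 1 := by
  refine Real.sSup_le ?_ zero_le_one
  rintro v ⟨p, -, rfl⟩
  exact abs_infDist_sub_le_one h0S hf01 hg01 p

lemma dlrho_mono : Monotone (dlrho S f g) := by
  intro a b hab
  rcases isEmpty_or_nonempty (({p : (Fin m → ℝ) × ℝ | ‖p‖ ≤ a}) : Set _) with h | h
  · have : ({p : (Fin m → ℝ) × ℝ | ‖p‖ ≤ a}) = ∅ := by
      rw [eq_empty_iff_forall_notMem]; exact fun x hx => h.elim ⟨x, hx⟩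
    rw [dlrho, this]
    simpa [Real.sSup_empty] using dlrho_nonneg h0S hf01 hg01 b
  · obtain ⟨⟨p, hp⟩⟩ := h
    exact csSup_le_csSup (dlrho_bddAbove h0S hf01 hg01 b) ⟨_, mem_image_of_mem _ hp⟩
      (image_mono fun q hq => le_trans hq hab)

end aux

section aux2
variable {m : ℕ} {S : Set (Fin m → ℝ)} {f g : (Fin m → ℝ) → ℝ}

lemma hypo_subset_add_ball_one (hf0 : ∀ x ∈ S, 0 ≤ f x) (hg1 : ∀ x ∈ S, g x ≤ 1) :
    hypo S g ⊆ hypo S f + Metric.closedBall (0 : (Fin m → ℝ) × ℝ) 1 := by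
  rintro ⟨x, t⟩ ⟨hxS, ht⟩
  simp only at hxS ht
  refine Set.mem_add.mpr ⟨(x, t - 1), ⟨hxS, show t - 1 ≤ f x by
      linarith [hf0 x hxS, hg1 x hxS]⟩, (0, 1), ?_, ?_⟩
  · rw [mem_closedBall_zero_iff, Prod.norm_def]
    simp
  · simp

lemma one_mem_hatdl_set (hf01 : ∀ x ∈ S, f x ∈ Set.Icc (0 : ℝ) 1)
    (hg01 : ∀ x ∈ S, g x ∈ Set.Icc (0 : ℝ) 1) (ρ : ℝ) :
    (1 : ℝ) ∈ {η : ℝ | 0 ≤ η ∧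
      hypo S f ∩ Metric.closedBall (0 : (Fin m → ℝ) × ℝ) ρ ⊆ hypo S g + Metric.closedBall (0 : (Fin m → ℝ) × ℝ) η ∧
      hypo S g ∩ Metric.closedBall (0 : (Fin m → ℝ) × ℝ) ρ ⊆ hypo S f + Metric.closedBall (0 : (Fin m → ℝ) × ℝ) η} := by
  refine ⟨zero_le_one, ?_, ?_⟩
  · exact fun x hx => hypo_subset_add_ball_one (fun y hy => (hg01 y hy).1)
      (fun y hy => (hf01 y hy).2) hx.1
  · exact fun x hx => hypo_subset_add_ball_one (fun y hy => (hf01 y hy).1)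
      (fun y hy => (hg01 y hy).2) hx.1

lemma hatdl_nonneg (hf01 : ∀ x ∈ S, f x ∈ Set.Icc (0 : ℝ) 1)
    (hg01 : ∀ x ∈ S, g x ∈ Set.Icc (0 : ℝ) 1) (ρ : ℝ) : 0 ≤ hatdl S f g ρ :=
  le_csInf ⟨1, one_mem_hatdl_set hf01 hg01 ρ⟩ fun _ hη => hη.1

lemma dlrho_comm (ρ : ℝ) : dlrho S f g ρ = dlrho S g f ρ := by
  unfold dlrho
  congr 1
  ext v
  constructor <;> rintro ⟨p, hp, rfl⟩ <;> exact ⟨p, hp, (abs_sub_comm _ _)⟩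

lemma incl_of_dlrho (hS : IsClosed S) (hgusc : UpperSemicontinuousOn g S)
    (h0S : (0 : Fin m → ℝ) ∈ S)
    (hf01 : ∀ x ∈ S, f x ∈ Set.Icc (0 : ℝ) 1) (hg01 : ∀ x ∈ S, g x ∈ Set.Icc (0 : ℝ) 1)
    {ρ : ℝ} :
    hypo S f ∩ Metric.closedBall (0 : (Fin m → ℝ) × ℝ) ρ ⊆
      hypo S g + Metric.closedBall (0 : (Fin m → ℝ) × ℝ) (dlrho S f g ρ) := by
  have hgne : (hypo S g).Nonempty := ⟨_, mem_hypo_zero h0S (hg01 0 h0S).1⟩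
  rintro x ⟨hxf, hxB⟩
  have hx : infDist x (hypo S g) ≤ dlrho S f g ρ := by
    have h0 : infDist x (hypo S f) = 0 := infDist_zero_of_mem hxf
    have h1 := le_csSup (dlrho_bddAbove h0S hf01 hg01 ρ)
      (mem_image_of_mem (fun p => |infDist p (hypo S f) - infDist p (hypo S g)|)
        (show x ∈ {p : (Fin m → ℝ) × ℝ | ‖p‖ ≤ ρ} from mem_closedBall_zero_iff.mp hxB))
    rw [h0, zero_sub, abs_neg, abs_of_nonneg infDist_nonneg] at h1
    exact h1
  obtain ⟨y, hy, hxy⟩ := (hypo_closed hS hgusc).exists_infDist_eq_dist hgne x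
  refine Set.mem_add.mpr ⟨y, hy, x - y, mem_closedBall_zero_iff.mpr ?_, by abel⟩
  rw [← dist_eq_norm]
  rw [hxy] at hx
  exact hx

lemma infDist_le_of_incl (hS : IsClosed S) (hfusc : UpperSemicontinuousOn f S)
    (h0S : (0 : Fin m → ℝ) ∈ S) (hf01 : ∀ x ∈ S, f x ∈ Set.Icc (0 : ℝ) 1)
    {ρ : ℝ} {p : (Fin m → ℝ) × ℝ} (hp : ‖p‖ ≤ ρ) {η : ℝ}
    (hincl : hypo S f ∩ Metric.closedBall (0 : (Fin m → ℝ) × ℝ) (2 * ρ) ⊆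
      hypo S g + Metric.closedBall (0 : (Fin m → ℝ) × ℝ) η) :
    infDist p (hypo S g) ≤ infDist p (hypo S f) + η := by
  have hfne : (hypo S f).Nonempty := ⟨_, mem_hypo_zero h0S (hf01 0 h0S).1⟩
  obtain ⟨y, hy, hdy⟩ := (hypo_closed hS hfusc).exists_infDist_eq_dist hfne p
  have hd : infDist p (hypo S f) ≤ ρ := by
    have h1 : infDist p (hypo S f) ≤ dist p ((0, 0) : (Fin m → ℝ) × ℝ) :=
      infDist_le_dist_of_mem (mem_hypo_zero h0S (hf01 0 h0S).1)
    have h2 : dist p ((0, 0) : (Fin m → ℝ) × ℝ) = ‖p‖ := by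
      have : ((0, 0) : (Fin m → ℝ) × ℝ) = 0 := rfl
      rw [this, dist_zero_right]
    linarith
  have hynorm : ‖y‖ ≤ 2 * ρ := by
    have h3 : dist (0 : (Fin m → ℝ) × ℝ) y ≤ dist (0 : (Fin m → ℝ) × ℝ) p + dist p y :=
      dist_triangle _ _ _
    rw [dist_zero_left, dist_zero_left] at h3
    rw [← hdy] at h3
    linarith
  obtain ⟨b, hb, c, hc, hbc⟩ := Set.mem_add.mp
    (hincl ⟨hy, mem_closedBall_zero_iff.mpr hynorm⟩)
  have h4 : infDist p (hypo S g) ≤ dist p b := infDist_le_dist_of_mem hb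
  have h5 : dist y b = ‖c‖ := by
    rw [dist_eq_norm, ← hbc]
    simp
  have h6 : dist p b ≤ dist p y + dist y b := dist_triangle _ _ _
  have h7 : ‖c‖ ≤ η := mem_closedBall_zero_iff.mp hc
  rw [h5] at h6
  rw [← hdy] at h6
  linarith

lemma hatdl_le_dlrho (hS : IsClosed S) (hfusc : UpperSemicontinuousOn f S)
    (hgusc : UpperSemicontinuousOn g S) (h0S : (0 : Fin m → ℝ) ∈ S)
    (hf01 : ∀ x ∈ S, f x ∈ Set.Icc (0 : ℝ) 1) (hg01 : ∀ x ∈ S, g x ∈ Set.Icc (0 : ℝ) 1)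
    (ρ : ℝ) : hatdl S f g ρ ≤ dlrho S f g ρ := by
  refine csInf_le ⟨0, fun η hη => hη.1⟩ ?_
  refine ⟨dlrho_nonneg h0S hf01 hg01 ρ, incl_of_dlrho hS hgusc h0S hf01 hg01, ?_⟩
  rw [dlrho_comm]
  exact incl_of_dlrho hS hfusc h0S hg01 hf01

lemma dlrho_le_hatdl (hS : IsClosed S) (hfusc : UpperSemicontinuousOn f S)
    (hgusc : UpperSemicontinuousOn g S) (h0S : (0 : Fin m → ℝ) ∈ S)
    (hf01 : ∀ x ∈ S, f x ∈ Set.Icc (0 : ℝ) 1) (hg01 : ∀ x ∈ S, g x ∈ Set.Icc (0 : ℝ) 1)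
    (ρ : ℝ) : dlrho S f g ρ ≤ hatdl S f g (2 * ρ) := by
  refine Real.sSup_le ?_ (hatdl_nonneg hf01 hg01 _)
  rintro v ⟨p, hp, rfl⟩
  refine le_csInf ⟨1, one_mem_hatdl_set hf01 hg01 _⟩ ?_
  rintro η ⟨hη0, h1, h2⟩
  rw [abs_sub_le_iff]
  constructor
  · linarith [infDist_le_of_incl hS hgusc h0S hg01 (mem_setOf.mp hp) h2]
  · linarith [infDist_le_of_incl hS hfusc h0S hf01 (mem_setOf.mp hp) h1]

end aux2

/-- Let f, g be nondecreasing usc functions from S to [0,1] with 0 ∈ S.  For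
every ρ ∈ [0,∞), d̂l_ρ(f,g) e^{−ρ} ≤ dl(f,g) ≤ e^{−ρ} + (1 − e^{−ρ}) d̂l_{2ρ}(f,g),
where dl(f,g) = ∫₀^∞ dl_τ(f,g) e^{−τ} dτ. -/
theorem stmt6 {m : ℕ} (S : Set (Fin m → ℝ)) (hS : IsClosed S)
    (h0S : (0 : Fin m → ℝ) ∈ S) (f g : (Fin m → ℝ) → ℝ)
    (hf : UpperSemicontinuousOn f S) (hg : UpperSemicontinuousOn g S)
    (hfmono : MonotoneOn f S) (hgmono : MonotoneOn g S)
    (hf01 : ∀ x ∈ S, f x ∈ Set.Icc (0 : ℝ) 1) (hg01 : ∀ x ∈ S, g x ∈ Set.Icc (0 : ℝ) 1) :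
    ∀ ρ : ℝ, 0 ≤ ρ →
      hatdl S f g ρ * Real.exp (-ρ) ≤ dl S f g ∧
      dl S f g ≤ Real.exp (-ρ) + (1 - Real.exp (-ρ)) * hatdl S f g (2 * ρ) := by
  intro ρ hρ
  have hdlnn : ∀ τ : ℝ, 0 ≤ dlrho S f g τ := dlrho_nonneg h0S hf01 hg01
  have hdl1 : ∀ τ : ℝ, dlrho S f g τ ≤ 1 := dlrho_le_one h0S hf01 hg01
  have hmono : Monotone (dlrho S f g) := dlrho_mono h0S hf01 hg01
  have hmeash : Measurable (fun τ => dlrho S f g τ * Real.exp (-τ)) :=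
    hmono.measurable.mul (Real.measurable_exp.comp measurable_neg)
  have hexpint : ∀ a : ℝ, MeasureTheory.IntegrableOn (fun τ => Real.exp (-τ)) (Set.Ioi a) := by
    intro a
    simpa using exp_neg_integrableOn_Ioi a one_pos
  have hint : ∀ a : ℝ, MeasureTheory.IntegrableOn (fun τ => dlrho S f g τ * Real.exp (-τ))
      (Set.Ioi a) := by
    intro a
    refine (hexpint a).mono' hmeash.aestronglyMeasurable (Filter.Eventually.of_forall fun τ => ?_)
    rw [Real.norm_eq_abs, abs_mul, abs_of_nonneg (hdlnn τ), abs_of_nonneg (Real.exp_pos _).le]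
    exact mul_le_of_le_one_left (Real.exp_pos _).le (hdl1 τ)
  constructor
  · -- lower bound
    have e1 : ∫ τ in Set.Ioi ρ, hatdl S f g ρ * Real.exp (-τ) = hatdl S f g ρ * Real.exp (-ρ) := by
      rw [MeasureTheory.integral_const_mul, integral_exp_neg_Ioi]
    have e2 : ∫ τ in Set.Ioi ρ, hatdl S f g ρ * Real.exp (-τ) ≤
        ∫ τ in Set.Ioi ρ, dlrho S f g τ * Real.exp (-τ) := by
      refine MeasureTheory.setIntegral_mono_on ((hexpint ρ).const_mul _) (hint ρ)
        measurableSet_Ioi fun τ hτ => ?_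
      refine mul_le_mul_of_nonneg_right ?_ (Real.exp_pos _).le
      exact le_trans (hatdl_le_dlrho hS hf hg h0S hf01 hg01 ρ) (hmono (le_of_lt hτ))
    have e3 : (∫ τ in Set.Ioi ρ, dlrho S f g τ * Real.exp (-τ)) ≤
        ∫ τ in Set.Ioi 0, dlrho S f g τ * Real.exp (-τ) := by
      refine MeasureTheory.setIntegral_mono_set (hint 0)
        (Filter.Eventually.of_forall fun τ => mul_nonneg (hdlnn τ) (Real.exp_pos _).le)
        (HasSubset.Subset.eventuallyLE (Set.Ioi_subset_Ioi hρ))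
    show hatdl S f g ρ * Real.exp (-ρ) ≤ ∫ τ in Set.Ioi 0, dlrho S f g τ * Real.exp (-τ)
    linarith
  · -- upper bound
    have hsplit : (∫ τ in Set.Ioi 0, dlrho S f g τ * Real.exp (-τ)) =
        (∫ τ in Set.Ioc 0 ρ, dlrho S f g τ * Real.exp (-τ)) +
        ∫ τ in Set.Ioi ρ, dlrho S f g τ * Real.exp (-τ) := by
      rw [← MeasureTheory.setIntegral_union (Set.Ioc_disjoint_Ioi le_rfl) measurableSet_Ioi
        ((hint 0).mono_set Set.Ioc_subset_Ioi_self) (hint ρ), Set.Ioc_union_Ioi_eq_Ioi hρ]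
    have u1 : (∫ τ in Set.Ioc 0 ρ, dlrho S f g τ * Real.exp (-τ)) ≤
        ∫ τ in Set.Ioc 0 ρ, hatdl S f g (2 * ρ) * Real.exp (-τ) := by
      refine MeasureTheory.setIntegral_mono_on ((hint 0).mono_set Set.Ioc_subset_Ioi_self)
        (((hexpint 0).mono_set Set.Ioc_subset_Ioi_self).const_mul _) measurableSet_Ioc
        fun τ hτ => ?_
      refine mul_le_mul_of_nonneg_right ?_ (Real.exp_pos _).le
      exact le_trans (hmono hτ.2) (dlrho_le_hatdl hS hf hg h0S hf01 hg01 ρ)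
    have u2 : (∫ τ in Set.Ioc 0 ρ, hatdl S f g (2 * ρ) * Real.exp (-τ)) =
        hatdl S f g (2 * ρ) * (1 - Real.exp (-ρ)) := by
      rw [MeasureTheory.integral_const_mul]
      congr 1
      rw [← intervalIntegral.integral_of_le hρ,
        intervalIntegral.integral_comp_neg (f := Real.exp), integral_exp]
      simp
    have u3 : (∫ τ in Set.Ioi ρ, dlrho S f g τ * Real.exp (-τ)) ≤
        ∫ τ in Set.Ioi ρ, Real.exp (-τ) := by
      refine MeasureTheory.setIntegral_mono_on (hint ρ) (hexpint ρ) measurableSet_Ioi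
        fun τ _ => ?_
      exact mul_le_of_le_one_left (Real.exp_pos _).le (hdl1 τ)
    have u4 : (∫ τ in Set.Ioi ρ, Real.exp (-τ)) = Real.exp (-ρ) := integral_exp_neg_Ioi ρ
    show (∫ τ in Set.Ioi 0, dlrho S f g τ * Real.exp (-τ)) ≤
      Real.exp (-ρ) + (1 - Real.exp (-ρ)) * hatdl S f g (2 * ρ)
    rw [hsplit]
    nlinarith [hatdl_nonneg hf01 hg01 (2*ρ)]
end

section
/- Let F^ν : S → [0,1] be usc and suppose each F^ν satisfies lim_{x → b} F^ν(x) = 1, where b = (β₁,…,β_m) is the upper corner of the compact rectangle S. If F^ν hypo-converges to F, then lim_{x → b} F(x) = 1, i.e., F(b) = 1 if F is usc and nondecreasing. -/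
open Filter Set

/-- Sequential characterization of hypo-convergence of `[0,1]`-valued functions on `S`:
(a) `limsup_ν F^ν(x^ν) ≤ f(x)` for every sequence `x^ν → x` in `S`, and
(b) for every `x ∈ S` there is a sequence `x^ν → x` in `S` with
`liminf_ν F^ν(x^ν) ≥ f(x)`. -/
def HypoConv {X : Type*} [MetricSpace X] (S : Set X) (F : ℕ → X → ℝ) (f : X → ℝ) : Prop :=
  (∀ x ∈ S, ∀ xs : ℕ → X, (∀ ν, xs ν ∈ S) → Filter.Tendsto xs Filter.atTop (nhds x) →
    Filter.limsup (fun ν => F ν (xs ν)) Filter.atTop ≤ f x) ∧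
  (∀ x ∈ S, ∃ xs : ℕ → X, (∀ ν, xs ν ∈ S) ∧ Filter.Tendsto xs Filter.atTop (nhds x) ∧
    f x ≤ Filter.liminf (fun ν => F ν (xs ν)) Filter.atTop)

/-- The closed box `[α₁,β₁] × ⋯ × [α_m,β_m]`. -/
def closedBox {m : ℕ} (α β : Fin m → ℝ) : Set (Fin m → ℝ) :=
  {x | ∀ i, α i ≤ x i ∧ x i ≤ β i}

/-- Let F^ν : S → [0,1] be usc on the compact rectangle
S = [α₁,β₁] × ⋯ × [α_m,β_m] with lim_{x→b} F^ν(x) = 1 at the upper corner b = β.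
If F^ν hypo-converges to F, which is usc and nondecreasing with values in [0,1],
then F(b) = 1. -/
theorem stmt11 {m : ℕ} (α β : Fin m → ℝ) (hαβ : ∀ i, α i ≤ β i)
    (F : ℕ → (Fin m → ℝ) → ℝ) (Flim : (Fin m → ℝ) → ℝ)
    (husc : ∀ ν, UpperSemicontinuousOn (F ν) (closedBox α β))
    (h01 : ∀ ν, ∀ x ∈ closedBox α β, F ν x ∈ Set.Icc (0 : ℝ) 1)
    (hlim1 : ∀ ν, Filter.Tendsto (F ν) (nhdsWithin β (closedBox α β)) (nhds 1))
    (hconv : HypoConv (closedBox α β) F Flim)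
    (hlimusc : UpperSemicontinuousOn Flim (closedBox α β))
    (hlimmono : MonotoneOn Flim (closedBox α β))
    (hlim01 : ∀ x ∈ closedBox α β, Flim x ∈ Set.Icc (0 : ℝ) 1) :
    Flim β = 1 := by
  have hβ : β ∈ closedBox α β := fun i => ⟨hαβ i, le_refl _⟩
  have hFb : ∀ ν, F ν β = 1 := by
    intro ν
    have h := (hlim1 ν).mono_left (pure_le_nhdsWithin hβ)
    exact pure_le_nhds_iff.mp h
  have h1 : (1 : ℝ) ≤ Flim β := by
    have := hconv.1 β hβ (fun _ => β) (fun _ => hβ) tendsto_const_nhds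
    simpa [hFb] using this
  exact le_antisymm (hlim01 β hβ).2 h1
end

section
/- There exists a sequence of nondecreasing usc functions F^ν : [0,1]² → [0,1], each satisfying the distribution condition Δ_A F^ν ≥ 0 for a fixed rectangle A, which hypo-converges to a nondecreasing usc function F with Δ_A F = −1 < 0. Hence the set of usc nondecreasing functions satisfying the distribution condition is not closed under hypo-convergence. -/
open Filter Set

noncomputable section

def Cnu (ν : ℕ) : Set (ℝ × ℝ) :=
  {z | (1/(ν+1:ℝ) ≤ z.1 ∧ 1 ≤ z.2) ∨ (1 ≤ z.1 ∧ 1/(ν+1:ℝ) ≤ z.2)}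

def Clim : Set (ℝ × ℝ) := {z | 1 ≤ z.1 ∨ 1 ≤ z.2}

def Fnu (ν : ℕ) : ℝ × ℝ → ℝ := (Cnu ν).indicator fun _ => 1
def Fl : ℝ × ℝ → ℝ := Clim.indicator fun _ => 1

lemma Cnu_closed (ν : ℕ) : IsClosed (Cnu ν) :=
  (((isClosed_le continuous_const continuous_fst).inter
    (isClosed_le continuous_const continuous_snd)).union
   ((isClosed_le continuous_const continuous_fst).inter
    (isClosed_le continuous_const continuous_snd)))

lemma Clim_closed : IsClosed Clim :=
  ((isClosed_le continuous_const continuous_fst).union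
   (isClosed_le continuous_const continuous_snd))

lemma Cnu_up (ν : ℕ) {z w : ℝ × ℝ} (h : z ≤ w) (hz : z ∈ Cnu ν) : w ∈ Cnu ν := by
  obtain ⟨h1, h2⟩ := h
  rcases hz with ⟨a, b⟩ | ⟨a, b⟩
  · exact Or.inl ⟨a.trans h1, b.trans h2⟩
  · exact Or.inr ⟨a.trans h1, b.trans h2⟩

lemma Clim_up {z w : ℝ × ℝ} (h : z ≤ w) (hz : z ∈ Clim) : w ∈ Clim := by
  rcases hz with a | a
  · exact Or.inl (a.trans h.1)
  · exact Or.inr (a.trans h.2)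

lemma ind_mono {C : Set (ℝ × ℝ)} (hC : ∀ {z w : ℝ × ℝ}, z ≤ w → z ∈ C → w ∈ C) :
    Monotone (C.indicator fun _ => (1:ℝ)) := by
  intro z w h
  by_cases hz : z ∈ C
  · rw [Set.indicator_of_mem hz, Set.indicator_of_mem (hC h hz)]
  · rw [Set.indicator_of_notMem hz]
    exact Set.indicator_nonneg (fun _ _ => zero_le_one) _

lemma ind_mem {C : Set (ℝ × ℝ)} (p : ℝ × ℝ) :
    (C.indicator fun _ => (1:ℝ)) p ∈ Set.Icc (0:ℝ) 1 := by
  by_cases hp : p ∈ C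
  · simp [Set.indicator_of_mem hp]
  · simp [Set.indicator_of_notMem hp]

lemma one_div_succ_le_one (ν : ℕ) : 1/(ν+1:ℝ) ≤ 1 := by
  rw [div_le_one (by positivity)]
  linarith [Nat.cast_nonneg (α := ℝ) ν]

end
lemma tendsto_aux : Tendsto (fun ν : ℕ => 1/(ν+1:ℝ)) atTop (nhds 0) :=
  tendsto_one_div_add_atTop_nhds_zero_nat

lemma hypo_s12 : HypoConv (Set.Icc ((0:ℝ), (0:ℝ)) ((1:ℝ), (1:ℝ))) Fnu Fl := by
  constructor
  · intro x hx xs hxs ht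
    by_cases hC : x ∈ Clim
    · rw [Fl, Set.indicator_of_mem hC]
      exact Filter.limsup_le_of_le (isCoboundedUnder_le_of_le atTop fun ν => (ind_mem _).1)
        (Eventually.of_forall fun ν => (ind_mem (xs ν)).2)
    · rw [Fl, Set.indicator_of_notMem hC]
      rw [Clim, Set.mem_setOf_eq, not_or, not_le, not_le] at hC
      have h1 : Tendsto (fun ν => (xs ν).1) atTop (nhds x.1) :=
        (continuous_fst.tendsto x).comp ht
      have h2 : Tendsto (fun ν => (xs ν).2) atTop (nhds x.2) :=
        (continuous_snd.tendsto x).comp ht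
      have hev : ∀ᶠ ν in atTop, Fnu ν (xs ν) ≤ 0 := by
        filter_upwards [h1.eventually_lt_const hC.1, h2.eventually_lt_const hC.2] with ν a b
        rw [Fnu, Set.indicator_of_notMem]
        rintro (⟨_, c⟩ | ⟨c, _⟩) <;> linarith
      exact Filter.limsup_le_of_le (isCoboundedUnder_le_of_le atTop fun ν => (ind_mem _).1) hev
  · intro x hx
    by_cases hC : x ∈ Clim
    · refine ⟨fun ν => (max x.1 (1/(ν+1:ℝ)), max x.2 (1/(ν+1:ℝ))), ?_, ?_, ?_⟩
      · intro ν
        exact Set.mem_Icc.2 ⟨Prod.mk_le_mk.2 ⟨le_max_of_le_right (by positivity),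
            le_max_of_le_right (by positivity)⟩,
          Prod.mk_le_mk.2 ⟨max_le hx.2.1 (one_div_succ_le_one ν),
            max_le hx.2.2 (one_div_succ_le_one ν)⟩⟩
      · have hA : Tendsto (fun ν : ℕ => max x.1 (1/(ν+1:ℝ))) atTop (nhds (max x.1 0)) :=
          tendsto_const_nhds.max tendsto_aux
        have hB : Tendsto (fun ν : ℕ => max x.2 (1/(ν+1:ℝ))) atTop (nhds (max x.2 0)) :=
          tendsto_const_nhds.max tendsto_aux
        have := hA.prodMk_nhds hB
        rwa [max_eq_left hx.1.1, max_eq_left hx.1.2, Prod.mk.eta] at this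
      · have hone : ∀ ν, Fnu ν (max x.1 (1/(ν+1:ℝ)), max x.2 (1/(ν+1:ℝ))) = 1 := by
          intro ν
          rw [Fnu]
          rcases hC with h | h
          · exact Set.indicator_of_mem (show (max x.1 (1/(ν+1:ℝ)), max x.2 (1/(ν+1:ℝ))) ∈ Cnu ν
              from Or.inr ⟨le_max_of_le_left h, le_max_right _ _⟩) _
          · exact Set.indicator_of_mem (show (max x.1 (1/(ν+1:ℝ)), max x.2 (1/(ν+1:ℝ))) ∈ Cnu ν
              from Or.inl ⟨le_max_right _ _, le_max_of_le_left h⟩) _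
        rw [Fl, Set.indicator_of_mem hC]
        have heq : (fun ν => Fnu ν ((fun ν => (max x.1 (1/(ν+1:ℝ)), max x.2 (1/(ν+1:ℝ)))) ν))
            = fun _ => (1:ℝ) := funext fun ν => hone ν
        rw [heq, liminf_const]
    · refine ⟨fun _ => x, fun _ => hx, tendsto_const_nhds, ?_⟩
      rw [Fl, Set.indicator_of_notMem hC]
      exact Filter.le_liminf_of_le (isCoboundedUnder_ge_of_le atTop fun ν => (ind_mem _).2)
        (Eventually.of_forall fun ν => (ind_mem (x)).1)


/-- There is a rectangle A = [x₁,x₂] × [y₁,y₂] ⊆ [0,1]² and a sequence of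
nondecreasing usc functions F^ν : [0,1]² → [0,1], each satisfying the distribution
condition Δ_A F^ν ≥ 0, which hypo-converges to a nondecreasing usc function F with
Δ_A F = −1 < 0.  Hence the set of usc nondecreasing functions satisfying the distribution
condition is not closed under hypo-convergence. -/
theorem stmt12 :
    ∃ (x₁ x₂ y₁ y₂ : ℝ), x₁ ∈ Set.Icc (0:ℝ) 1 ∧ x₂ ∈ Set.Icc (0:ℝ) 1 ∧
      y₁ ∈ Set.Icc (0:ℝ) 1 ∧ y₂ ∈ Set.Icc (0:ℝ) 1 ∧ x₁ ≤ x₂ ∧ y₁ < y₂ ∧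
    ∃ (F : ℕ → ℝ × ℝ → ℝ) (Flim : ℝ × ℝ → ℝ),
      (∀ ν, MonotoneOn (F ν) (Set.Icc ((0:ℝ), (0:ℝ)) ((1:ℝ), (1:ℝ)))) ∧
      (∀ ν, UpperSemicontinuousOn (F ν) (Set.Icc ((0:ℝ), (0:ℝ)) ((1:ℝ), (1:ℝ)))) ∧
      (∀ ν, ∀ p ∈ Set.Icc ((0:ℝ), (0:ℝ)) ((1:ℝ), (1:ℝ)), F ν p ∈ Set.Icc (0:ℝ) 1) ∧
      (∀ ν, 0 ≤ F ν (x₂, y₂) - F ν (x₁, y₂) - F ν (x₂, y₁) + F ν (x₁, y₁)) ∧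
      HypoConv (Set.Icc ((0:ℝ), (0:ℝ)) ((1:ℝ), (1:ℝ))) F Flim ∧
      MonotoneOn Flim (Set.Icc ((0:ℝ), (0:ℝ)) ((1:ℝ), (1:ℝ))) ∧
      UpperSemicontinuousOn Flim (Set.Icc ((0:ℝ), (0:ℝ)) ((1:ℝ), (1:ℝ))) ∧
      (∀ p ∈ Set.Icc ((0:ℝ), (0:ℝ)) ((1:ℝ), (1:ℝ)), Flim p ∈ Set.Icc (0:ℝ) 1) ∧
      Flim (x₂, y₂) - Flim (x₁, y₂) - Flim (x₂, y₁) + Flim (x₁, y₁) = -1 := by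
  refine ⟨0, 1, 0, 1, by norm_num, by norm_num, by norm_num, by norm_num, by norm_num,
    by norm_num, Fnu, Fl, ?_, ?_, ?_, ?_, hypo_s12, ?_, ?_, ?_, ?_⟩
  · exact fun ν => (ind_mono (Cnu_up ν)).monotoneOn _
  · exact fun ν => ((Cnu_closed ν).upperSemicontinuous_indicator zero_le_one).upperSemicontinuousOn _
  · exact fun ν p _ => ind_mem p
  · intro ν
    have h1 : Fnu ν (1,1) = 1 := by
      rw [Fnu, Set.indicator_of_mem (show ((1:ℝ),(1:ℝ)) ∈ Cnu ν from Or.inl ⟨one_div_succ_le_one ν, le_refl 1⟩)]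
    have h2 : Fnu ν (0,1) = 0 := by
      rw [Fnu, Set.indicator_of_notMem]
      rintro (⟨a, _⟩ | ⟨a, _⟩)
      · exact absurd a (by simp; positivity)
      · norm_num at a
    have h3 : Fnu ν (1,0) = 0 := by
      rw [Fnu, Set.indicator_of_notMem]
      rintro (⟨_, b⟩ | ⟨_, b⟩)
      · norm_num at b
      · exact absurd b (by simp; positivity)
    have h4 : Fnu ν (0,0) = 0 := by
      rw [Fnu, Set.indicator_of_notMem]
      rintro (⟨_, b⟩ | ⟨a, _⟩) <;> norm_num at *
    rw [h1, h2, h3, h4]; norm_num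
  · exact (ind_mono fun h hz => Clim_up h hz).monotoneOn _
  · exact (Clim_closed.upperSemicontinuous_indicator zero_le_one).upperSemicontinuousOn _
  · exact fun p _ => ind_mem p
  · have h1 : Fl (1,1) = 1 := Set.indicator_of_mem (show ((1:ℝ),(1:ℝ)) ∈ Clim from Or.inl le_rfl) _
    have h2 : Fl (0,1) = 1 := Set.indicator_of_mem (show ((0:ℝ),(1:ℝ)) ∈ Clim from Or.inr le_rfl) _
    have h3 : Fl (1,0) = 1 := Set.indicator_of_mem (show ((1:ℝ),(0:ℝ)) ∈ Clim from Or.inl le_rfl) _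
    have h4 : Fl (0,0) = 0 := by
      rw [Fl, Set.indicator_of_notMem]
      rintro (a | a) <;> norm_num at a
    rw [h1, h2, h3, h4]; norm_num
end

section
/- Let A be a rectangle in S with vertices v₁,…,v_{2^m}, partitioned into A⁺ (sign +1) and A⁻ (sign −1). Suppose F^ν : S → [0,1] are usc, equi-usc at every vertex in A⁻, satisfy Δ_A F^ν ≥ 0 for all ν, and hypo-converge to F. Then Δ_A F ≥ 0. -/
open Filter Set

/-- The vertex of the rectangle `[a,b]` selected by `ε : Fin m → Bool`
(`ε i = true` picks the upper bound `b i`, `ε i = false` the lower bound `a i`). -/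
def vertex {m : ℕ} (a b : Fin m → ℝ) (ε : Fin m → Bool) : Fin m → ℝ :=
  fun i => if ε i then b i else a i

/-- The sign of a vertex: `+1` if the number of coordinates at a lower bound is even,
`−1` if it is odd. -/
def vsign {m : ℕ} (ε : Fin m → Bool) : ℝ :=
  if Even (Finset.univ.filter fun i : Fin m => ε i = false).card then 1 else -1

/-- `Δ_A F = Σ_j sign_A(v_j) F(v_j)` over the 2^m vertices of the rectangle `A = [a,b]`. -/
noncomputable def deltaA {m : ℕ} (a b : Fin m → ℝ) (F : (Fin m → ℝ) → ℝ) : ℝ :=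
  ∑ ε : Fin m → Bool, vsign ε * F (vertex a b ε)

/-- Let A = [a,b] be a rectangle in S with vertices v₁,…,v_{2^m} partitioned
into A⁺ (sign +1) and A⁻ (sign −1).  If the usc functions F^ν : S → [0,1] are equi-usc at
every vertex in A⁻, satisfy Δ_A F^ν ≥ 0 for all ν, and hypo-converge to F, then
Δ_A F ≥ 0. -/
theorem stmt13 {m : ℕ} (S : Set (Fin m → ℝ)) (a b : Fin m → ℝ) (hab : ∀ i, a i ≤ b i)
    (hvS : ∀ ε : Fin m → Bool, vertex a b ε ∈ S)
    (F : ℕ → (Fin m → ℝ) → ℝ) (Flim : (Fin m → ℝ) → ℝ)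
    (husc : ∀ ν, UpperSemicontinuousOn (F ν) S)
    (h01 : ∀ ν, ∀ x ∈ S, F ν x ∈ Set.Icc (0 : ℝ) 1)
    (hequi : ∀ ε : Fin m → Bool, vsign ε = -1 →
      ∀ e > (0 : ℝ), ∃ δ > (0 : ℝ), ∀ ν, ∀ x ∈ S,
        ‖x - vertex a b ε‖ ≤ δ → F ν x ≤ F ν (vertex a b ε) + e)
    (hΔ : ∀ ν, 0 ≤ deltaA a b (F ν))
    (hconv : HypoConv S F Flim) :
    0 ≤ deltaA a b Flim := by
  -- boundedness helpers
  have bddle : ∀ (xs : ℕ → Fin m → ℝ), (∀ ν, xs ν ∈ S) →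
      Filter.atTop.IsBoundedUnder (· ≤ ·) (fun ν => F ν (xs ν)) := fun xs hxs =>
    Filter.isBoundedUnder_of ⟨1, fun ν => (h01 ν _ (hxs ν)).2⟩
  have bddge : ∀ (xs : ℕ → Fin m → ℝ), (∀ ν, xs ν ∈ S) →
      Filter.atTop.IsBoundedUnder (· ≥ ·) (fun ν => F ν (xs ν)) := fun xs hxs =>
    Filter.isBoundedUnder_of ⟨0, fun ν => (h01 ν _ (hxs ν)).1⟩
  -- Step A: limsup F^ν(v) ≤ Flim v at every vertex
  have stepA : ∀ ε : Fin m → Bool,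
      Filter.limsup (fun ν => F ν (vertex a b ε)) Filter.atTop ≤ Flim (vertex a b ε) := by
    intro ε
    exact hconv.1 (vertex a b ε) (hvS ε) (fun _ => vertex a b ε) (fun _ => hvS ε) tendsto_const_nhds
  -- Step B: Flim v ≤ liminf F^ν(v) at negative vertices
  have stepB : ∀ ε : Fin m → Bool, vsign ε = -1 →
      Flim (vertex a b ε) ≤ Filter.liminf (fun ν => F ν (vertex a b ε)) Filter.atTop := by
    intro ε hsg
    obtain ⟨xs, hxsS, hxst, hxsl⟩ := hconv.2 (vertex a b ε) (hvS ε)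
    have key : ∀ e > (0:ℝ), Flim (vertex a b ε) ≤
        Filter.liminf (fun ν => F ν (vertex a b ε)) Filter.atTop + e := by
      intro e he
      obtain ⟨δ, hδ, hδ2⟩ := hequi ε hsg e he
      have hev : ∀ᶠ ν in Filter.atTop, F ν (xs ν) ≤ F ν (vertex a b ε) + e := by
        have := (Metric.tendsto_nhds.mp hxst δ hδ)
        filter_upwards [this] with ν hν
        exact hδ2 ν (xs ν) (hxsS ν) (by rw [← dist_eq_norm] at *; exact hν.le)
      calc Flim (vertex a b ε) ≤ Filter.liminf (fun ν => F ν (xs ν)) Filter.atTop := hxsl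
        _ ≤ Filter.liminf (fun ν => F ν (vertex a b ε) + e) Filter.atTop := by
            refine Filter.liminf_le_liminf hev (bddge xs hxsS) ?_
            exact (Filter.isBoundedUnder_of ⟨1 + e, fun ν =>
              by linarith [(h01 ν _ (hvS ε)).2]⟩ :
              Filter.atTop.IsBoundedUnder (· ≤ ·) _).isCoboundedUnder_ge
        _ = Filter.liminf (fun ν => F ν (vertex a b ε)) Filter.atTop + e := by
            exact liminf_add_const Filter.atTop (fun ν => F ν (vertex a b ε)) e
              ((bddle _ (fun _ => hvS ε)).isCoboundedUnder_ge) (bddge _ (fun _ => hvS ε))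
    exact le_of_forall_pos_le_add key
  -- main ε-argument
  refine le_of_forall_pos_le_add ?_
  intro e he
  set N : ℝ := (2:ℝ)^m
  have hN : (0:ℝ) < N := by positivity
  have hcard : (Finset.univ : Finset (Fin m → Bool)).card = 2^m := by
    simp [Finset.card_univ]
  set e' : ℝ := e / N with he'def
  have he' : 0 < e' := div_pos he hN
  -- eventually bounds at each vertex
  have hev : ∀ ε : Fin m → Bool, ∀ᶠ ν in Filter.atTop,
      vsign ε * F ν (vertex a b ε) ≤ vsign ε * Flim (vertex a b ε) + e' := by
    intro ε
    by_cases hsg : Even (Finset.univ.filter fun i : Fin m => ε i = false).card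
    · have hv1 : vsign ε = 1 := by simp [vsign, hsg]
      have h1 : Filter.limsup (fun ν => F ν (vertex a b ε)) Filter.atTop
          < Flim (vertex a b ε) + e' := lt_of_le_of_lt (stepA ε) (by linarith)
      have := Filter.eventually_lt_of_limsup_lt h1 (bddle _ (fun _ => hvS ε))
      filter_upwards [this] with ν hν
      rw [hv1]; linarith
    · have hv1 : vsign ε = -1 := by simp [vsign, hsg]
      have h1 : Flim (vertex a b ε) - e'
          < Filter.liminf (fun ν => F ν (vertex a b ε)) Filter.atTop :=
        lt_of_lt_of_le (by linarith) (stepB ε hv1)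
      have := Filter.eventually_lt_of_lt_liminf h1 (bddge _ (fun _ => hvS ε))
      filter_upwards [this] with ν hν
      rw [hv1]; linarith
  have hall : ∀ᶠ ν in Filter.atTop, ∀ ε : Fin m → Bool,
      vsign ε * F ν (vertex a b ε) ≤ vsign ε * Flim (vertex a b ε) + e' :=
    Filter.eventually_all.mpr hev
  obtain ⟨ν, hν⟩ := hall.exists
  have h1 : deltaA a b (F ν) ≤ deltaA a b Flim + e := by
    have : deltaA a b (F ν) ≤ ∑ ε : Fin m → Bool,
        (vsign ε * Flim (vertex a b ε) + e') :=
      Finset.sum_le_sum fun ε _ => hν ε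
    rw [Finset.sum_add_distrib] at this
    have hsum : ∑ _ε : Fin m → Bool, e' = N * e' := by
      rw [Finset.sum_const, hcard, nsmul_eq_mul]
      norm_num [N]
    rw [hsum, he'def, mul_div_cancel₀ _ (ne_of_gt hN)] at this
    exact this
  linarith [hΔ ν]
end

section
/- Let f : S → [0,1] be usc on a compact rectangle S, and let {R^ν} be an infinite refinement of S (box partitions with the refinement property). Define s^ν(x) = max over boxes R_k^ν whose closure contains x of sup_{z ∈ cl R_k^ν} f(z). Then each s^ν is an usc epi-spline of order 0, s^ν ≥ f pointwise, and s^ν hypo-converges to f; in particular the union over ν of order-0 epi-splines is dense in (usc-fcns(S), dl). -/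
open Filter Set Topology

/-- The open box `(l₁,u₁) × ⋯ × (l_m,u_m)`. -/
def openBox {m : ℕ} (l u : Fin m → ℝ) : Set (Fin m → ℝ) :=
  {x | ∀ i, l i < x i ∧ x i < u i}

lemma isClosed_closedBox {m : ℕ} (a b : Fin m → ℝ) : IsClosed (closedBox a b) := by
  have h : closedBox a b = Set.pi Set.univ (fun i => Set.Icc (a i) (b i)) := by
    ext x; simp only [closedBox, Set.mem_setOf_eq, Set.mem_univ_pi, Set.mem_Icc]
  rw [h]
  exact isClosed_set_pi (fun i _ => isClosed_Icc)

/-- Let f : S → [0,1] be usc on the compact rectangle S = [α,β], and let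
{R^ν} be an infinite refinement of S by box partitions.  Define
s^ν(x) = max over boxes whose closure contains x of sup_{cl R_k^ν} f.  Then each s^ν is an
usc epi-spline of order 0 (constant on each open box), s^ν ≥ f pointwise on S, and s^ν
hypo-converges to f; in particular the union over ν of the order-0 epi-splines is dense in
(usc-fcns(S), dl). -/
theorem stmt15 {m : ℕ} (α β : Fin m → ℝ) (hαβ : ∀ i, α i ≤ β i)
    (N : ℕ → ℕ) (l u : (ν : ℕ) → Fin (N ν) → Fin m → ℝ)
    (hnondeg : ∀ ν k, ∀ i, l ν k i < u ν k i)
    (hboxS : ∀ ν k, closedBox (l ν k) (u ν k) ⊆ closedBox α β)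
    (hcover : ∀ ν, closedBox α β ⊆ ⋃ k, closedBox (l ν k) (u ν k))
    (hdisj : ∀ ν, ∀ k k', k ≠ k' →
      Disjoint (openBox (l ν k) (u ν k)) (openBox (l ν k') (u ν k')))
    (hrefine : ∀ x ∈ closedBox α β, ∀ ε > (0 : ℝ), ∃ ν₀ : ℕ, ∃ δ ∈ Set.Ioo (0 : ℝ) ε,
      ∀ ν ≥ ν₀, ∀ k, (closedBox (l ν k) (u ν k) ∩ Metric.closedBall x δ).Nonempty →
        closedBox (l ν k) (u ν k) ⊆ Metric.closedBall x ε)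
    (f : (Fin m → ℝ) → ℝ)
    (hf : UpperSemicontinuousOn f (closedBox α β))
    (hf01 : ∀ x ∈ closedBox α β, f x ∈ Set.Icc (0 : ℝ) 1)
    (s : ℕ → (Fin m → ℝ) → ℝ)
    (hs : ∀ ν, ∀ x ∈ closedBox α β, s ν x =
      sSup ((fun k => sSup (f '' closedBox (l ν k) (u ν k))) ''
        {k : Fin (N ν) | x ∈ closedBox (l ν k) (u ν k)})) :
    (∀ ν, ∀ x ∈ closedBox α β, f x ≤ s ν x) ∧
    (∀ ν, ∀ k, ∃ c : ℝ, ∀ x ∈ openBox (l ν k) (u ν k), s ν x = c) ∧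
    (∀ ν, UpperSemicontinuousOn (s ν) (closedBox α β)) ∧
    HypoConv (closedBox α β) s f := by
  -- basic facts about the boxes and sups
  have hboxne : ∀ ν k, (closedBox (l ν k) (u ν k)).Nonempty := by
    intro ν k
    refine ⟨fun i => (l ν k i + u ν k i) / 2, fun i => ?_⟩
    constructor <;> · have := hnondeg ν k i; linarith
  have himgne : ∀ ν k, (f '' closedBox (l ν k) (u ν k)).Nonempty :=
    fun ν k => (hboxne ν k).image f
  have himgbdd : ∀ ν k, BddAbove (f '' closedBox (l ν k) (u ν k)) := by
    intro ν k
    refine ⟨1, ?_⟩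
    rintro _ ⟨z, hz, rfl⟩
    exact (hf01 z (hboxS ν k hz)).2
  have hgle1 : ∀ ν k, sSup (f '' closedBox (l ν k) (u ν k)) ≤ 1 := by
    intro ν k
    refine csSup_le (himgne ν k) ?_
    rintro _ ⟨z, hz, rfl⟩
    exact (hf01 z (hboxS ν k hz)).2
  have hfleg : ∀ ν k, ∀ z ∈ closedBox (l ν k) (u ν k),
      f z ≤ sSup (f '' closedBox (l ν k) (u ν k)) :=
    fun ν k z hz => le_csSup (himgbdd ν k) (Set.mem_image_of_mem f hz)
  -- the family of candidate values at a point
  have hAne : ∀ ν, ∀ x ∈ closedBox α β,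
      ((fun k => sSup (f '' closedBox (l ν k) (u ν k))) ''
        {k : Fin (N ν) | x ∈ closedBox (l ν k) (u ν k)}).Nonempty := by
    intro ν x hx
    obtain ⟨k, hk⟩ := Set.mem_iUnion.mp (hcover ν hx)
    exact ⟨_, ⟨k, hk, rfl⟩⟩
  have hAbdd : ∀ ν (x : Fin m → ℝ),
      BddAbove ((fun k => sSup (f '' closedBox (l ν k) (u ν k))) ''
        {k : Fin (N ν) | x ∈ closedBox (l ν k) (u ν k)}) := by
    intro ν x
    refine ⟨1, ?_⟩
    rintro _ ⟨k, hk, rfl⟩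
    exact hgle1 ν k
  have hfs : ∀ ν, ∀ x ∈ closedBox α β, f x ≤ s ν x := by
    intro ν x hx
    rw [hs ν x hx]
    obtain ⟨k, hk⟩ := Set.mem_iUnion.mp (hcover ν hx)
    exact le_trans (hfleg ν k x hk) (le_csSup (hAbdd ν x) ⟨k, hk, rfl⟩)
  have hsle1 : ∀ ν, ∀ x ∈ closedBox α β, s ν x ≤ 1 := by
    intro ν x hx
    rw [hs ν x hx]
    refine csSup_le (hAne ν x hx) ?_
    rintro _ ⟨k, hk, rfl⟩
    exact hgle1 ν k
  refine ⟨hfs, ?_, ?_, ?_, ?_⟩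
  · -- constant on open boxes
    intro ν k
    refine ⟨sSup (f '' closedBox (l ν k) (u ν k)), ?_⟩
    intro x hx
    have hxc : x ∈ closedBox (l ν k) (u ν k) := fun i => ⟨(hx i).1.le, (hx i).2.le⟩
    have hxS : x ∈ closedBox α β := hboxS ν k hxc
    rw [hs ν x hxS]
    have hset : {k' : Fin (N ν) | x ∈ closedBox (l ν k') (u ν k')} = {k} := by
      ext k'
      simp only [Set.mem_setOf_eq, Set.mem_singleton_iff]
      constructor
      · intro hk'
        by_contra hne
        refine absurd (hdisj ν k' k hne) (Set.not_disjoint_iff.mpr ?_)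
        refine ⟨fun i => (max (l ν k' i) (l ν k i) + min (u ν k' i) (u ν k i)) / 2, ?_, ?_⟩
        · intro i
          have h1 := (hk' i).1; have h2 := (hk' i).2
          have h3 := (hx i).1; have h4 := (hx i).2
          have h5 : l ν k' i ≤ max (l ν k' i) (l ν k i) := le_max_left _ _
          have h6 : l ν k i ≤ max (l ν k' i) (l ν k i) := le_max_right _ _
          have h7 : min (u ν k' i) (u ν k i) ≤ u ν k' i := min_le_left _ _
          have h8 : min (u ν k' i) (u ν k i) ≤ u ν k i := min_le_right _ _
          have h9 : max (l ν k' i) (l ν k i) < min (u ν k' i) (u ν k i) :=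
            max_lt (lt_min (hnondeg ν k' i) (by linarith)) (lt_min (by linarith) (hnondeg ν k i))
          constructor <;> linarith
        · intro i
          have h1 := (hk' i).1; have h2 := (hk' i).2
          have h3 := (hx i).1; have h4 := (hx i).2
          have h5 : l ν k' i ≤ max (l ν k' i) (l ν k i) := le_max_left _ _
          have h6 : l ν k i ≤ max (l ν k' i) (l ν k i) := le_max_right _ _
          have h7 : min (u ν k' i) (u ν k i) ≤ u ν k' i := min_le_left _ _
          have h8 : min (u ν k' i) (u ν k i) ≤ u ν k i := min_le_right _ _
          have h9 : max (l ν k' i) (l ν k i) < min (u ν k' i) (u ν k i) :=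
            max_lt (lt_min (hnondeg ν k' i) (by linarith)) (lt_min (by linarith) (hnondeg ν k i))
          constructor <;> linarith
      · rintro rfl; exact hxc
    rw [hset, Set.image_singleton, csSup_singleton]
  · -- upper semicontinuity of s ν
    intro ν x hx y hxy
    set C : Set (Fin m → ℝ) :=
      ⋃ k ∈ {k : Fin (N ν) | x ∉ closedBox (l ν k) (u ν k)}, closedBox (l ν k) (u ν k) with hC
    have hCclosed : IsClosed C :=
      Set.Finite.isClosed_biUnion (Set.toFinite _) (fun k _ => isClosed_closedBox _ _)
    have hxC : x ∉ C := by
      intro hxmem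
      obtain ⟨k, hk1, hk2⟩ := Set.mem_iUnion₂.mp hxmem
      exact hk1 hk2
    obtain ⟨ε, hε, hball⟩ := Metric.isOpen_iff.mp hCclosed.isOpen_compl x hxC
    show {z | s ν z < y} ∈ 𝓝[closedBox α β] x
    refine Metric.mem_nhdsWithin_iff.mpr ⟨ε, hε, ?_⟩
    rintro z ⟨hzball, hzS⟩
    have hKsub : {k : Fin (N ν) | z ∈ closedBox (l ν k) (u ν k)} ⊆
        {k : Fin (N ν) | x ∈ closedBox (l ν k) (u ν k)} := by
      intro k hk
      by_contra hxk
      exact (hball hzball) (Set.mem_biUnion hxk hk)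
    have hle : s ν z ≤ s ν x := by
      rw [hs ν z hzS, hs ν x hx]
      exact csSup_le_csSup (hAbdd ν x) (hAne ν z hzS) (Set.image_mono hKsub)
    exact lt_of_le_of_lt hle hxy
  · -- limsup part of hypo-convergence
    intro x hx xs hxsS hxs
    have hcb : IsCoboundedUnder (· ≤ ·) atTop (fun ν => s ν (xs ν)) :=
      isCoboundedUnder_le_of_le atTop
        (fun ν => le_trans (hf01 (xs ν) (hxsS ν)).1 (hfs ν (xs ν) (hxsS ν)))
    have key : ∀ c, f x < c → limsup (fun ν => s ν (xs ν)) atTop ≤ c := by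
      intro c hc
      have hev : ∀ᶠ z in 𝓝[closedBox α β] x, f z < c := hf x hx c hc
      obtain ⟨ε, hε, hsub⟩ := Metric.mem_nhdsWithin_iff.mp hev
      obtain ⟨ν₀, δ, hδ, href⟩ := hrefine x hx (ε / 2) (by linarith)
      refine limsup_le_of_le hcb ?_
      filter_upwards [hxs.eventually (Metric.ball_mem_nhds x hδ.1),
        eventually_ge_atTop ν₀] with ν hballν hν
      rw [hs ν (xs ν) (hxsS ν)]
      refine csSup_le (hAne ν (xs ν) (hxsS ν)) ?_
      rintro _ ⟨k, hk, rfl⟩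
      have hcont : closedBox (l ν k) (u ν k) ⊆ Metric.closedBall x (ε / 2) := by
        refine href ν hν k ⟨xs ν, hk, ?_⟩
        exact Metric.mem_closedBall.mpr (Metric.mem_ball.mp hballν).le
      refine csSup_le (himgne ν k) ?_
      rintro _ ⟨z, hz, rfl⟩
      have hzball : z ∈ Metric.ball x ε := by
        have h1 := Metric.mem_closedBall.mp (hcont hz)
        rw [Metric.mem_ball]
        linarith
      exact (hsub ⟨hzball, hboxS ν k hz⟩).le
    by_contra hlt
    push_neg at hlt
    have h2 := key ((f x + limsup (fun ν => s ν (xs ν)) atTop) / 2) (by linarith)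
    linarith
  · -- liminf part of hypo-convergence
    intro x hx
    refine ⟨fun _ => x, fun _ => hx, tendsto_const_nhds, ?_⟩
    refine le_liminf_of_le ?_ (Eventually.of_forall fun ν => hfs ν x hx)
    exact isCoboundedUnder_ge_of_le atTop (fun ν => hsle1 ν x hx)
end
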